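/- Independence distribution over disjunction (rule 6), two-element case restriction: if |M| > 1, then for first-order θ0, θ1 and teams X, M ⊨_X ∃x0(⋀_{i≤m} u_i ⊥_{w_i} v_i ∧ θ0) ∨ ∃x1(⋀_{m<i≤m+n} u_i ⊥_{w_i} v_i ∧ θ1) if and only if M ⊨_X ∃x0 ∃x1 ∃z0 ∃z1 ∃r [⋀_{i≤m+n} u_i ⊥_{w_i r} v_i ∧ dep(z0) ∧ dep(z1) ∧ ¬z0=z1 ∧ ((θ0 ∧ r=z0) ∨ (θ1 ∧ r=z1))], where x0 is a tuple of variables not occurring in the second disjunct, x1 a tuple not occurring in the first, the u_i, v_i, w_i are tuples of bound variables, and z0, z1, r are fresh variables. -/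

import Mathlib

open FirstOrder Language

/-- Formulas of independence logic over a first-order language `L`, with variables `ℕ`:
first-order formulas, conditional independence atoms `t1 ⊥_{t3} t2` (written
`indep t1 t2 t3`) between tuples (lists) of terms, conjunction, disjunction, and
existential and universal quantification. -/
inductive TeamFormula (L : Language) : Type _ where
  | fo (φ : L.Formula ℕ)
  | indep (t1 t2 t3 : List (L.Term ℕ))
  | and (φ ψ : TeamFormula L)
  | or (φ ψ : TeamFormula L)
  | ex (x : ℕ) (φ : TeamFormula L)
  | all (x : ℕ) (φ : TeamFormula L)

namespace TeamFormula

variable {L : Language}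

/-- The set of free variables of an independence-logic formula. -/
def Fr : TeamFormula L → Set ℕ
  | .fo φ => ↑φ.freeVarFinset
  | .indep t1 t2 t3 => ↑((t1 ++ t2 ++ t3).foldr (fun t s => t.varFinset ∪ s) ∅)
  | .and φ ψ => φ.Fr ∪ ψ.Fr
  | .or φ ψ => φ.Fr ∪ ψ.Fr
  | .ex x φ => φ.Fr \ {x}
  | .all x φ => φ.Fr \ {x}

/-- A team is a set of assignments. -/
abbrev Team (M : Type*) := Set (ℕ → M)

/-- The value of a tuple (list) of terms under an assignment. -/
def listVal {M : Type*} [L.Structure M] (ts : List (L.Term ℕ)) (s : ℕ → M) : List M :=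
  ts.map fun t => t.realize s

/-- Lax team semantics for independence logic.  First-order formulas are evaluated
pointwise; disjunction splits the team into a union; `∃x φ` is witnessed by a function
`F` from the team to nonempty sets of elements, extending the team to
`X(F/x) = {s(a/x) : s ∈ X, a ∈ F s}`; `∀x φ` duplicates the team to `X(M/x)`. -/
def Sat (M : Type*) [L.Structure M] : TeamFormula L → Team M → Prop
  | .fo φ, X => ∀ s ∈ X, φ.Realize s
  | .indep t1 t2 t3, X => ∀ s ∈ X, ∀ s' ∈ X, listVal t3 s = listVal t3 s' →
      ∃ s'' ∈ X, listVal t1 s'' = listVal t1 s ∧ listVal t3 s'' = listVal t3 s ∧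
        listVal t2 s'' = listVal t2 s'
  | .and φ ψ, X => φ.Sat M X ∧ ψ.Sat M X
  | .or φ ψ, X => ∃ Y Z : Team M, Y ∪ Z = X ∧ φ.Sat M Y ∧ ψ.Sat M Z
  | .ex x φ, X => ∃ F : (ℕ → M) → Set M, (∀ s ∈ X, (F s).Nonempty) ∧
      φ.Sat M {s' | ∃ s ∈ X, ∃ a ∈ F s, s' = Function.update s x a}
  | .all x φ, X => φ.Sat M {s' | ∃ s ∈ X, ∃ a : M, s' = Function.update s x a}

end TeamFormula

open FirstOrder Language

/-- Iterated existential quantification over a tuple of variables. -/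
def exList {L : Language} (xs : List ℕ) (φ : TeamFormula L) : TeamFormula L :=
  xs.foldr TeamFormula.ex φ

/-- Conjunction of a list of formulas with a base formula. -/
def andList {L : Language} (l : List (TeamFormula L)) (base : TeamFormula L) :
    TeamFormula L :=
  l.foldr TeamFormula.and base

/-- The independence atom `u ⊥_{w ++ extra} v` where `(u, w, v)` is a triple of tuples
of variables. -/
def mkIndep {L : Language} (extra : List ℕ) (a : List ℕ × List ℕ × List ℕ) :
    TeamFormula L :=
  TeamFormula.indep (a.1.map Term.var) (a.2.2.map Term.var) ((a.2.1 ++ extra).map Term.var)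

/-- The dependence atom `dep(z)`, i.e. `z` is constant on the team, expressed (as in the
paper) as the conditional independence atom `z ⊥_∅ z`. -/
def depAtom {L : Language} (z : ℕ) : TeamFormula L :=
  TeamFormula.indep [Term.var z] [Term.var z] []

namespace TeamAux

open TeamFormula

variable {L : Language} {M : Type*} [L.Structure M]

lemma sat_fo_iff (φ : L.Formula ℕ) (X : Team M) :
    (TeamFormula.fo φ).Sat M X ↔ ∀ s ∈ X, φ.Realize s := Iff.rfl

lemma sat_and_iff (φ ψ : TeamFormula L) (X : Team M) :
    (φ.and ψ).Sat M X ↔ φ.Sat M X ∧ ψ.Sat M X := Iff.rfl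

lemma sat_or_iff (φ ψ : TeamFormula L) (X : Team M) :
    (φ.or ψ).Sat M X ↔ ∃ Y Z : Team M, Y ∪ Z = X ∧ φ.Sat M Y ∧ ψ.Sat M Z := Iff.rfl

lemma sat_ex_iff (x : ℕ) (φ : TeamFormula L) (X : Team M) :
    (TeamFormula.ex x φ).Sat M X ↔ ∃ F : (ℕ → M) → Set M, (∀ s ∈ X, (F s).Nonempty) ∧
      φ.Sat M {s' | ∃ s ∈ X, ∃ a ∈ F s, s' = Function.update s x a} := Iff.rfl

lemma sat_indep_iff (t1 t2 t3 : List (L.Term ℕ)) (X : Team M) :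
    (TeamFormula.indep t1 t2 t3).Sat M X ↔ ∀ s ∈ X, ∀ s' ∈ X,
      listVal t3 s = listVal t3 s' →
      ∃ s'' ∈ X, listVal t1 s'' = listVal t1 s ∧ listVal t3 s'' = listVal t3 s ∧
        listVal t2 s'' = listVal t2 s' := Iff.rfl

lemma listVal_map_var (vs : List ℕ) (s : ℕ → M) :
    listVal (L := L) (vs.map Term.var) s = vs.map s := by
  simp [listVal, List.map_map, Function.comp_def, Term.realize]

lemma realize_congr_freeVar (φ : L.Formula ℕ) {v v' : ℕ → M}
    (h : ∀ x ∈ φ.freeVarFinset, v x = v' x) : φ.Realize v ↔ φ.Realize v' := by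
  classical
  have h2 : (v ∘ (Subtype.val : (↑(φ.freeVarFinset : Set ℕ)) → ℕ)) = v' ∘ Subtype.val :=
    funext fun x => h x (by exact_mod_cast x.2)
  have hs : ↑φ.freeVarFinset ⊆ (↑φ.freeVarFinset : Set ℕ) := Set.Subset.rfl
  unfold Formula.Realize
  rw [← BoundedFormula.realize_restrictFreeVar' hs (v := v),
    ← BoundedFormula.realize_restrictFreeVar' hs (v := v'), h2]

lemma exList_sat (xs : List ℕ) (φ : TeamFormula L) (X : Team M) :
    (exList xs φ).Sat M X ↔ ∃ Y : Team M,
      (∀ s ∈ X, ∃ s' ∈ Y, ∀ v, v ∉ xs → s' v = s v) ∧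
      (∀ s' ∈ Y, ∃ s ∈ X, ∀ v, v ∉ xs → s' v = s v) ∧ φ.Sat M Y := by
  induction xs generalizing X with
  | nil =>
    simp only [exList, List.foldr_nil]
    constructor
    · intro h
      exact ⟨X, fun s hs => ⟨s, hs, fun _ _ => rfl⟩, fun s hs => ⟨s, hs, fun _ _ => rfl⟩, h⟩
    · rintro ⟨Y, h1, h2, h3⟩
      have hYX : Y = X := by
        ext s; constructor
        · intro hs
          obtain ⟨t, ht, he⟩ := h2 s hs
          have : s = t := funext fun v => he v List.not_mem_nil
          rwa [this]
        · intro hs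
          obtain ⟨t, ht, he⟩ := h1 s hs
          have : t = s := funext fun v => he v List.not_mem_nil
          rwa [← this]
      rwa [hYX] at h3
  | cons x xs ih =>
    show (TeamFormula.ex x (exList xs φ)).Sat M X ↔ _
    rw [sat_ex_iff]
    constructor
    · rintro ⟨F, hne, hsat⟩
      rw [ih] at hsat
      obtain ⟨Y, hc1, hc2, hφ⟩ := hsat
      refine ⟨Y, ?_, ?_, hφ⟩
      · intro s hs
        obtain ⟨a, ha⟩ := hne s hs
        obtain ⟨s', hs', he⟩ := hc1 (Function.update s x a) ⟨s, hs, a, ha, rfl⟩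
        refine ⟨s', hs', fun v hv => ?_⟩
        have hvx : v ≠ x := fun h => hv (h ▸ (List.mem_cons_self (a := x) (l := xs)))
        have hvxs : v ∉ xs := fun h => hv (List.mem_cons_of_mem _ h)
        rw [he v hvxs, Function.update_of_ne hvx]
      · intro s' hs'
        obtain ⟨t, ht, he⟩ := hc2 s' hs'
        obtain ⟨s, hs, a, _, rfl⟩ := ht
        refine ⟨s, hs, fun v hv => ?_⟩
        have hvx : v ≠ x := fun h => hv (h ▸ (List.mem_cons_self (a := x) (l := xs)))
        have hvxs : v ∉ xs := fun h => hv (List.mem_cons_of_mem _ h)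
        rw [he v hvxs, Function.update_of_ne hvx]
    · rintro ⟨Y, hc1, hc2, hφ⟩
      refine ⟨fun s => {a | ∃ s' ∈ Y, (∀ v, v ∉ x :: xs → s' v = s v) ∧ a = s' x}, ?_, ?_⟩
      · intro s hs
        obtain ⟨s', hs', he⟩ := hc1 s hs
        exact ⟨s' x, s', hs', he, rfl⟩
      · rw [ih]
        refine ⟨Y, ?_, ?_, hφ⟩
        · rintro t ⟨s, hs, a, ⟨s', hs', he, rfl⟩, rfl⟩
          refine ⟨s', hs', fun v hv => ?_⟩
          by_cases hvx : v = x
          · subst hvx; simp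
          · rw [Function.update_of_ne hvx]
            exact he v (by simp [hvx, hv])
        · intro s' hs'
          obtain ⟨s, hs, he⟩ := hc2 s' hs'
          refine ⟨Function.update s x (s' x), ⟨s, hs, s' x, ⟨s', hs', he, rfl⟩, rfl⟩,
            fun v hv => ?_⟩
          by_cases hvx : v = x
          · subst hvx; simp
          · rw [Function.update_of_ne hvx]
            exact he v (by simp [hvx, hv])

lemma andList_sat (l : List (TeamFormula L)) (base : TeamFormula L) (X : Team M) :
    (andList l base).Sat M X ↔ (∀ ψ ∈ l, ψ.Sat M X) ∧ base.Sat M X := by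
  induction l with
  | nil => simp [andList]
  | cons ψ l ih =>
    show (ψ.and (andList l base)).Sat M X ↔ _
    rw [sat_and_iff, ih]
    constructor
    · rintro ⟨h1, h2, h3⟩
      exact ⟨fun χ hχ => (List.mem_cons.mp hχ).elim (fun h => h ▸ h1) (h2 χ), h3⟩
    · rintro ⟨h1, h2⟩
      exact ⟨h1 ψ List.mem_cons_self, fun χ hχ => h1 χ (List.mem_cons_of_mem _ hχ), h2⟩

lemma depAtom_sat (z : ℕ) (X : Team M) :
    (depAtom (L := L) z).Sat M X ↔ ∀ s ∈ X, ∀ t ∈ X, s z = t z := by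
  rw [depAtom, sat_indep_iff]
  constructor
  · intro h s hs t ht
    obtain ⟨s'', _, h1, _, h2⟩ := h s hs t ht rfl
    simp only [listVal, List.map_cons, List.map_nil, Term.realize, List.cons.injEq] at h1 h2
    exact h1.1.symm.trans h2.1
  · intro h s hs t ht _
    refine ⟨s, hs, rfl, rfl, ?_⟩
    simp only [listVal, List.map_cons, List.map_nil, Term.realize]
    rw [h s hs t ht]

end TeamAux
namespace TeamAux

open TeamFormula

variable {L : Language} {M : Type*} [L.Structure M]

lemma mkIndep_sat_iff (e : List ℕ) (u w v : List ℕ) (X : Team M) :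
    (mkIndep (L := L) e (u, w, v)).Sat M X ↔ ∀ s ∈ X, ∀ t ∈ X,
      (w ++ e).map s = (w ++ e).map t →
      ∃ p ∈ X, u.map p = u.map s ∧ (w ++ e).map p = (w ++ e).map s ∧
        v.map p = v.map t := by
  rw [mkIndep, sat_indep_iff]
  simp only [listVal_map_var]

lemma split_indep (u w v : List ℕ) (r : ℕ) (A B : Team M) (c0 c1 : M)
    (hA : ∀ t ∈ A, t r = c0) (hB : ∀ t ∈ B, t r = c1) (hc : c0 ≠ c1) :
    (mkIndep (L := L) [r] (u, w, v)).Sat M (A ∪ B) ↔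
      (mkIndep (L := L) [] (u, w, v)).Sat M A ∧
      (mkIndep (L := L) [] (u, w, v)).Sat M B := by
  simp only [mkIndep_sat_iff, List.append_nil, List.map_append, List.map_cons, List.map_nil]
  constructor
  · intro h
    constructor
    · intro s hs t ht hw
      obtain ⟨p, hp, h1, h2, h3⟩ := h s (Or.inl hs) t (Or.inl ht)
        (by rw [hw, hA s hs, hA t ht])
      have hpr : p r = c0 := by
        rcases List.append_inj' h2.symm rfl with ⟨_, h4⟩
        simp only [List.cons.injEq] at h4
        rw [← h4.1, hA s hs]
      have hpA : p ∈ A := by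
        rcases hp with hp | hp
        · exact hp
        · exact absurd (hpr.symm.trans (hB p hp)) hc
      rcases List.append_inj' h2 rfl with ⟨h5, _⟩
      exact ⟨p, hpA, h1, h5, h3⟩
    · intro s hs t ht hw
      obtain ⟨p, hp, h1, h2, h3⟩ := h s (Or.inr hs) t (Or.inr ht)
        (by rw [hw, hB s hs, hB t ht])
      have hpr : p r = c1 := by
        rcases List.append_inj' h2 rfl with ⟨_, h4⟩
        simp only [List.cons.injEq] at h4
        rw [h4.1, hB s hs]
      have hpB : p ∈ B := by
        rcases hp with hp | hp
        · exact absurd ((hA p hp).symm.trans hpr) hc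
        · exact hp
      rcases List.append_inj' h2 rfl with ⟨h5, _⟩
      exact ⟨p, hpB, h1, h5, h3⟩
  · rintro ⟨h0, h1⟩ s hs t ht hw
    rcases List.append_inj' hw rfl with ⟨hww, hrr⟩
    simp only [List.cons.injEq] at hrr
    rcases hs with hs | hs
    · have htA : t ∈ A := by
        rcases ht with ht | ht
        · exact ht
        · exact absurd (((hA s hs).symm.trans hrr.1).trans (hB t ht)) hc
      obtain ⟨p, hp, g1, g2, g3⟩ := h0 s hs t htA hww
      exact ⟨p, Or.inl hp, g1, by rw [g2, hA p hp, hA s hs], g3⟩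
    · have htB : t ∈ B := by
        rcases ht with ht | ht
        · exact absurd (((hB s hs).symm.trans hrr.1).trans (hA t ht)) hc.symm
        · exact ht
      obtain ⟨p, hp, g1, g2, g3⟩ := h1 s hs t htB hww
      exact ⟨p, Or.inr hp, g1, by rw [g2, hB p hp, hB s hs], g3⟩

lemma transfer_indep (u w v : List ℕ) (P Q : Team M)
    (hPQ : ∀ p ∈ P, ∃ q ∈ Q, ∀ x ∈ u ++ w ++ v, p x = q x)
    (hQP : ∀ q ∈ Q, ∃ p ∈ P, ∀ x ∈ u ++ w ++ v, p x = q x) :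
    (mkIndep (L := L) [] (u, w, v)).Sat M P → (mkIndep (L := L) [] (u, w, v)).Sat M Q := by
  simp only [mkIndep_sat_iff, List.append_nil]
  intro h s hs t ht hw
  obtain ⟨s', hs', he1⟩ := hQP s hs
  obtain ⟨t', ht', he2⟩ := hQP t ht
  have hu1 : u.map s' = u.map s := List.map_congr_left fun x hx =>
    he1 x (by simp [hx])
  have hw1 : w.map s' = w.map s := List.map_congr_left fun x hx =>
    he1 x (by simp [hx])
  have hv2 : v.map t' = v.map t := List.map_congr_left fun x hx =>
    he2 x (by simp [hx])
  obtain ⟨p, hp, g1, g2, g3⟩ := h s' hs' t' ht' (by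
    rw [hw1, hw, ← List.map_congr_left fun x hx => he2 x (by simp [hx])])
  obtain ⟨q, hq, he3⟩ := hPQ p hp
  refine ⟨q, hq, ?_, ?_, ?_⟩
  · rw [← List.map_congr_left fun x hx => he3 x (by simp [hx]), g1, hu1]
  · rw [show w.map q = w.map p from (List.map_congr_left fun x hx =>
      he3 x (by simp [hx])).symm, g2, hw1]
  · rw [← List.map_congr_left fun x hx => he3 x (by simp [hx]), g3, hv2]

lemma const_indep (u w v : List ℕ) (P : Team M)
    (h : ∀ p ∈ P, ∀ q ∈ P, ∀ x ∈ v, p x = q x) :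
    (mkIndep (L := L) [] (u, w, v)).Sat M P := by
  rw [mkIndep_sat_iff]
  intro s hs t ht _
  exact ⟨s, hs, rfl, rfl, List.map_congr_left fun x hx => h s hs t ht x hx⟩

lemma empty_indep (e : List ℕ) (a : List ℕ × List ℕ × List ℕ) :
    (mkIndep (L := L) e a).Sat M (∅ : Team M) := by
  obtain ⟨u, w, v⟩ := a
  rw [mkIndep_sat_iff]
  intro s hs
  exact absurd hs (Set.notMem_empty s)

lemma realize_eqvar_iff (a b : ℕ) (s : ℕ → M) :
    (Term.equal (Term.var a) (Term.var b) : L.Formula ℕ).Realize s ↔ s a = s b := by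
  simp [Term.realize]

lemma realize_neqvar_iff (a b : ℕ) (s : ℕ → M) :
    ((Term.equal (Term.var a) (Term.var b)).not : L.Formula ℕ).Realize s ↔ ¬ s a = s b := by
  rw [Formula.realize_not, realize_eqvar_iff]

end TeamAux
/-- independence distribution over disjunction (rule 6), restricted to
structures with more than one element: for first-order `θ0, θ1` and all teams `X`,
`M ⊨_X ∃x0(⋀ᵢ uᵢ ⊥_{wᵢ} vᵢ ∧ θ0) ∨ ∃x1(⋀ᵢ uᵢ ⊥_{wᵢ} vᵢ ∧ θ1)` iff
`M ⊨_X ∃x0 ∃x1 ∃z0 ∃z1 ∃r [⋀ᵢ uᵢ ⊥_{wᵢ r} vᵢ ∧ dep(z0) ∧ dep(z1) ∧ ¬z0=z1 ∧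
((θ0 ∧ r=z0) ∨ (θ1 ∧ r=z1))]`, where the atoms of the first disjunct (listed in
`atoms0` as triples `(uᵢ, wᵢ, vᵢ)`) use only variables of the tuple `x0`, those of the
second (`atoms1`) only variables of `x1`, `x0` does not occur in the second disjunct,
`x1` does not occur in the first, and `z0, z1, r` are fresh. -/
theorem TeamFormula.indep_distribution {L : Language} {M : Type*} [L.Structure M]
    (θ0 θ1 : L.Formula ℕ)
    (x0 x1 : List ℕ) (z0 z1 r : ℕ)
    (atoms0 atoms1 : List (List ℕ × List ℕ × List ℕ))
    (hx0 : x0.Nodup) (hx1 : x1.Nodup) (hx01 : ∀ v ∈ x0, v ∉ x1)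
    (hatoms0 : ∀ a ∈ atoms0, ∀ v ∈ a.1 ++ a.2.1 ++ a.2.2, v ∈ x0)
    (hatoms1 : ∀ a ∈ atoms1, ∀ v ∈ a.1 ++ a.2.1 ++ a.2.2, v ∈ x1)
    (hx0θ1 : ∀ v ∈ x0, v ∉ θ1.freeVarFinset)
    (hx1θ0 : ∀ v ∈ x1, v ∉ θ0.freeVarFinset)
    (hfresh : ∀ v ∈ [z0, z1, r], v ∉ x0 ∧ v ∉ x1 ∧
      v ∉ θ0.freeVarFinset ∧ v ∉ θ1.freeVarFinset)
    (hzzr : z0 ≠ z1 ∧ z0 ≠ r ∧ z1 ≠ r)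
    (hM : ∃ a b : M, a ≠ b)
    (X : TeamFormula.Team M) :
    ((exList x0 (andList (atoms0.map (mkIndep [])) (.fo θ0))).or
      (exList x1 (andList (atoms1.map (mkIndep [])) (.fo θ1)))).Sat M X ↔
    (exList (x0 ++ x1 ++ [z0, z1, r])
      (andList ((atoms0 ++ atoms1).map (mkIndep [r]))
        ((depAtom z0).and ((depAtom z1).and
          ((TeamFormula.fo (Term.equal (Term.var z0) (Term.var z1)).not).and
            (((TeamFormula.fo θ0).and
                (.fo (Term.equal (Term.var r) (Term.var z0)))).or
              ((TeamFormula.fo θ1).and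
                (.fo (Term.equal (Term.var r) (Term.var z1)))))))))).Sat M X := by

  classical
  obtain ⟨hz0x0, hz0x1, hz0f0, hz0f1⟩ := hfresh z0 (by simp)
  obtain ⟨hz1x0, hz1x1, hz1f0, hz1f1⟩ := hfresh z1 (by simp)
  obtain ⟨hrx0, hrx1, hrf0, hrf1⟩ := hfresh r (by simp)
  obtain ⟨hz01, hz0r, hz1r⟩ := hzzr
  obtain ⟨c0, c1, hc⟩ := hM
  set V : List ℕ := x0 ++ x1 ++ [z0, z1, r] with hV
  have hVmem : ∀ v, v ∈ V ↔ v ∈ x0 ∨ v ∈ x1 ∨ v = z0 ∨ v = z1 ∨ v = r := by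
    intro v; simp [hV, List.mem_append, or_assoc]
  constructor
  · rintro ⟨Y, Z, hYZ, hY, hZ⟩
    rw [TeamAux.exList_sat] at hY hZ
    obtain ⟨Y', hY1, hY2, hYb⟩ := hY
    obtain ⟨Z', hZ1, hZ2, hZb⟩ := hZ
    rw [TeamAux.andList_sat] at hYb hZb
    obtain ⟨hYatoms, hYθ⟩ := hYb
    obtain ⟨hZatoms, hZθ⟩ := hZb
    rw [TeamAux.sat_fo_iff] at hYθ hZθ
    rw [TeamAux.exList_sat]
    set f0 : (ℕ → M) → ℕ → M := fun s v =>
      if v ∈ x1 then c0 else if v = z0 then c0 else if v = z1 then c1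
      else if v = r then c0 else s v with hf0
    set f1 : (ℕ → M) → ℕ → M := fun s v =>
      if v ∈ x0 then c0 else if v = z0 then c0 else if v = z1 then c1
      else if v = r then c1 else s v with hf1
    have hf0V : ∀ s v, v ∉ V → f0 s v = s v := by
      intro s v hv
      rw [hVmem] at hv; push_neg at hv
      simp only [hf0, if_neg hv.2.1, if_neg hv.2.2.1, if_neg hv.2.2.2.1, if_neg hv.2.2.2.2]
    have hf1V : ∀ s v, v ∉ V → f1 s v = s v := by
      intro s v hv
      rw [hVmem] at hv; push_neg at hv
      simp only [hf1, if_neg hv.1, if_neg hv.2.2.1, if_neg hv.2.2.2.1, if_neg hv.2.2.2.2]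
    have hf0x0 : ∀ s v, v ∈ x0 → f0 s v = s v := by
      intro s v hv
      simp only [hf0, if_neg (hx01 v hv), if_neg (show v ≠ z0 from fun h => hz0x0 (h ▸ hv)),
        if_neg (show v ≠ z1 from fun h => hz1x0 (h ▸ hv)),
        if_neg (show v ≠ r from fun h => hrx0 (h ▸ hv))]
    have hf1x1 : ∀ s v, v ∈ x1 → f1 s v = s v := by
      intro s v hv
      simp only [hf1, if_neg (show v ∉ x0 from fun h => hx01 v h hv),
        if_neg (show v ≠ z0 from fun h => hz0x1 (h ▸ hv)),
        if_neg (show v ≠ z1 from fun h => hz1x1 (h ▸ hv)),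
        if_neg (show v ≠ r from fun h => hrx1 (h ▸ hv))]
    have hf0t0 : ∀ s v, v ∈ θ0.freeVarFinset → f0 s v = s v := by
      intro s v hv
      simp only [hf0, if_neg (show v ∉ x1 from fun h => hx1θ0 v h hv),
        if_neg (show v ≠ z0 from fun h => hz0f0 (h ▸ hv)),
        if_neg (show v ≠ z1 from fun h => hz1f0 (h ▸ hv)),
        if_neg (show v ≠ r from fun h => hrf0 (h ▸ hv))]
    have hf1t1 : ∀ s v, v ∈ θ1.freeVarFinset → f1 s v = s v := by
      intro s v hv
      simp only [hf1, if_neg (show v ∉ x0 from fun h => hx0θ1 v h hv),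
        if_neg (show v ≠ z0 from fun h => hz0f1 (h ▸ hv)),
        if_neg (show v ≠ z1 from fun h => hz1f1 (h ▸ hv)),
        if_neg (show v ≠ r from fun h => hrf1 (h ▸ hv))]
    have hf0z0 : ∀ s, f0 s z0 = c0 := by
      intro s; simp [hf0, hz0x1]
    have hf0z1 : ∀ s, f0 s z1 = c1 := by
      intro s; simp [hf0, hz1x1, Ne.symm hz01]
    have hf0r : ∀ s, f0 s r = c0 := by
      intro s; simp [hf0, hrx1, Ne.symm hz0r, Ne.symm hz1r]
    have hf1z0 : ∀ s, f1 s z0 = c0 := by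
      intro s; simp [hf1, hz0x0]
    have hf1z1 : ∀ s, f1 s z1 = c1 := by
      intro s; simp [hf1, hz1x0, Ne.symm hz01]
    have hf1r : ∀ s, f1 s r = c1 := by
      intro s; simp [hf1, hrx0, Ne.symm hz0r, Ne.symm hz1r]
    refine ⟨(f0 '' Y') ∪ (f1 '' Z'), ?_, ?_, ?_⟩
    · intro s hs
      rw [← hYZ] at hs
      rcases hs with hs | hs
      · obtain ⟨s', hs', he⟩ := hY1 s hs
        refine ⟨f0 s', Or.inl ⟨s', hs', rfl⟩, fun v hv => ?_⟩
        rw [hf0V s' v hv, he v (fun h => hv ((hVmem v).2 (Or.inl h)))]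
      · obtain ⟨s', hs', he⟩ := hZ1 s hs
        refine ⟨f1 s', Or.inr ⟨s', hs', rfl⟩, fun v hv => ?_⟩
        rw [hf1V s' v hv, he v (fun h => hv ((hVmem v).2 (Or.inr (Or.inl h))))]
    · rintro t (⟨s', hs', rfl⟩ | ⟨s', hs', rfl⟩)
      · obtain ⟨s, hs, he⟩ := hY2 s' hs'
        refine ⟨s, hYZ ▸ Or.inl hs, fun v hv => ?_⟩
        rw [hf0V s' v hv, he v (fun h => hv ((hVmem v).2 (Or.inl h)))]
      · obtain ⟨s, hs, he⟩ := hZ2 s' hs'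
        refine ⟨s, hYZ ▸ Or.inr hs, fun v hv => ?_⟩
        rw [hf1V s' v hv, he v (fun h => hv ((hVmem v).2 (Or.inr (Or.inl h))))]
    · rw [TeamAux.andList_sat]
      constructor
      · intro ψ hψ
        rw [List.mem_map] at hψ
        obtain ⟨a, ha, rfl⟩ := hψ
        obtain ⟨u, w, v⟩ := a
        rw [List.mem_append] at ha
        rw [TeamAux.split_indep u w v r _ _ c0 c1
          (by rintro t ⟨s', _, rfl⟩; exact hf0r s')
          (by rintro t ⟨s', _, rfl⟩; exact hf1r s') hc]
        rcases ha with ha | ha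
        · have hvars := hatoms0 _ ha
          constructor
          · refine TeamAux.transfer_indep u w v Y' _ ?_ ?_
              (hYatoms _ (List.mem_map_of_mem (f := mkIndep []) ha))
            · intro p hp
              exact ⟨f0 p, ⟨p, hp, rfl⟩, fun x hx => (hf0x0 p x (hvars x hx)).symm⟩
            · rintro q ⟨p, hp, rfl⟩
              exact ⟨p, hp, fun x hx => (hf0x0 p x (hvars x hx)).symm⟩
          · refine TeamAux.const_indep u w v _ ?_
            rintro p ⟨s', _, rfl⟩ q ⟨t', _, rfl⟩ x hx
            have hxm : x ∈ x0 := hvars x (by simp [hx])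
            simp only [hf1, if_pos hxm]
        · have hvars := hatoms1 _ ha
          constructor
          · refine TeamAux.const_indep u w v _ ?_
            rintro p ⟨s', _, rfl⟩ q ⟨t', _, rfl⟩ x hx
            have hxm : x ∈ x1 := hvars x (by simp [hx])
            simp only [hf0, if_pos hxm]
          · refine TeamAux.transfer_indep u w v Z' _ ?_ ?_
              (hZatoms _ (List.mem_map_of_mem (f := mkIndep []) ha))
            · intro p hp
              exact ⟨f1 p, ⟨p, hp, rfl⟩, fun x hx => (hf1x1 p x (hvars x hx)).symm⟩
            · rintro q ⟨p, hp, rfl⟩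
              exact ⟨p, hp, fun x hx => (hf1x1 p x (hvars x hx)).symm⟩
      · rw [TeamAux.sat_and_iff, TeamAux.sat_and_iff, TeamAux.sat_and_iff]
        refine ⟨?_, ?_, ?_, ?_⟩
        · rw [TeamAux.depAtom_sat]
          rintro s (⟨s', _, rfl⟩ | ⟨s', _, rfl⟩) t (⟨t', _, rfl⟩ | ⟨t', _, rfl⟩) <;>
            simp only [hf0z0, hf1z0]
        · rw [TeamAux.depAtom_sat]
          rintro s (⟨s', _, rfl⟩ | ⟨s', _, rfl⟩) t (⟨t', _, rfl⟩ | ⟨t', _, rfl⟩) <;>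
            simp only [hf0z1, hf1z1]
        · rw [TeamAux.sat_fo_iff]
          rintro s (⟨s', _, rfl⟩ | ⟨s', _, rfl⟩) <;> rw [TeamAux.realize_neqvar_iff]
          · rw [hf0z0, hf0z1]; exact hc
          · rw [hf1z0, hf1z1]; exact hc
        · rw [TeamAux.sat_or_iff]
          refine ⟨f0 '' Y', f1 '' Z', rfl, ?_, ?_⟩
          · rw [TeamAux.sat_and_iff, TeamAux.sat_fo_iff, TeamAux.sat_fo_iff]
            constructor
            · rintro t ⟨s', hs', rfl⟩
              exact (TeamAux.realize_congr_freeVar θ0 (fun x hx => hf0t0 s' x hx)).mpr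
                (hYθ s' hs')
            · rintro t ⟨s', hs', rfl⟩
              rw [TeamAux.realize_eqvar_iff, hf0r, hf0z0]
          · rw [TeamAux.sat_and_iff, TeamAux.sat_fo_iff, TeamAux.sat_fo_iff]
            constructor
            · rintro t ⟨s', hs', rfl⟩
              exact (TeamAux.realize_congr_freeVar θ1 (fun x hx => hf1t1 s' x hx)).mpr
                (hZθ s' hs')
            · rintro t ⟨s', hs', rfl⟩
              rw [TeamAux.realize_eqvar_iff, hf1r, hf1z1]
  · intro h
    rw [TeamAux.exList_sat] at h
    obtain ⟨W, hW1, hW2, hWb⟩ := h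
    rw [TeamAux.andList_sat] at hWb
    obtain ⟨hatoms, hbase⟩ := hWb
    rw [TeamAux.sat_and_iff, TeamAux.sat_and_iff, TeamAux.sat_and_iff] at hbase
    obtain ⟨hdep0, hdep1, hneq, hor⟩ := hbase
    rw [TeamAux.depAtom_sat] at hdep0 hdep1
    rw [TeamAux.sat_fo_iff] at hneq
    rw [TeamAux.sat_or_iff] at hor
    obtain ⟨W0, W1, hWu, h0, h1⟩ := hor
    rw [TeamAux.sat_and_iff, TeamAux.sat_fo_iff, TeamAux.sat_fo_iff] at h0 h1
    obtain ⟨hθ0W, hr0W⟩ := h0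
    obtain ⟨hθ1W, hr1W⟩ := h1
    rw [TeamAux.sat_or_iff]
    by_cases hX : X = ∅
    · subst hX
      refine ⟨∅, ∅, by simp, ?_, ?_⟩ <;>
      · rw [TeamAux.exList_sat]
        refine ⟨∅, by simp, by simp, ?_⟩
        rw [TeamAux.andList_sat]
        refine ⟨?_, ?_⟩
        · intro ψ hψ
          rw [List.mem_map] at hψ
          obtain ⟨a, _, rfl⟩ := hψ
          exact TeamAux.empty_indep _ a
        · rw [TeamAux.sat_fo_iff]
          intro s hs
          exact absurd hs (Set.notMem_empty s)
    · obtain ⟨sx, hsx⟩ := Set.nonempty_iff_ne_empty.mpr hX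
      obtain ⟨t0, ht0, -⟩ := hW1 sx hsx
      have hcc : t0 z0 ≠ t0 z1 := (TeamAux.realize_neqvar_iff z0 z1 t0).mp (hneq t0 ht0)
      have hWz0 : ∀ t ∈ W, t z0 = t0 z0 := fun t ht => hdep0 t ht t0 ht0
      have hWz1 : ∀ t ∈ W, t z1 = t0 z1 := fun t ht => hdep1 t ht t0 ht0
      have hW0sub : W0 ⊆ W := hWu ▸ Set.subset_union_left
      have hW1sub : W1 ⊆ W := hWu ▸ Set.subset_union_right
      have hW0r : ∀ t ∈ W0, t r = t0 z0 := fun t ht =>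
        ((TeamAux.realize_eqvar_iff r z0 t).mp (hr0W t ht)).trans (hWz0 t (hW0sub ht))
      have hW1r : ∀ t ∈ W1, t r = t0 z1 := fun t ht =>
        ((TeamAux.realize_eqvar_iff r z1 t).mp (hr1W t ht)).trans (hWz1 t (hW1sub ht))
      refine ⟨{s ∈ X | ∃ t ∈ W0, ∀ v, v ∉ V → t v = s v},
              {s ∈ X | ∃ t ∈ W1, ∀ v, v ∉ V → t v = s v}, ?_, ?_, ?_⟩
      · ext s
        simp only [Set.mem_union, Set.mem_setOf_eq]
        constructor
        · rintro (⟨hs, -⟩ | ⟨hs, -⟩) <;> exact hs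
        · intro hs
          obtain ⟨t, ht, he⟩ := hW1 s hs
          rw [← hWu] at ht
          rcases ht with ht | ht
          · exact Or.inl ⟨hs, t, ht, he⟩
          · exact Or.inr ⟨hs, t, ht, he⟩
      · rw [TeamAux.exList_sat]
        refine ⟨{p | ∃ s ∈ X, ∃ t ∈ W0, (∀ v, v ∉ V → t v = s v) ∧
          p = fun v => if v ∈ x0 then t v else s v}, ?_, ?_, ?_⟩
        · rintro s ⟨hs, t, ht, he⟩
          refine ⟨_, ⟨s, hs, t, ht, he, rfl⟩, fun v hv => ?_⟩
          exact if_neg hv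
        · rintro p ⟨s, hs, t, ht, he, rfl⟩
          exact ⟨s, ⟨hs, t, ht, he⟩, fun v hv => if_neg hv⟩
        · rw [TeamAux.andList_sat]
          constructor
          · intro ψ hψ
            rw [List.mem_map] at hψ
            obtain ⟨a, ha, rfl⟩ := hψ
            obtain ⟨u, w, v⟩ := a
            have hvars := hatoms0 _ ha
            have hsatW : (mkIndep (L := L) [r] (u, w, v)).Sat M W :=
              hatoms _ (List.mem_map_of_mem (List.mem_append.mpr (Or.inl ha)))
            rw [← hWu] at hsatW
            have hsatW0 := ((TeamAux.split_indep u w v r W0 W1 (t0 z0) (t0 z1)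
              hW0r hW1r hcc).mp hsatW).1
            refine TeamAux.transfer_indep u w v W0 _ ?_ ?_ hsatW0
            · intro t ht
              obtain ⟨s, hs, he⟩ := hW2 t (hW0sub ht)
              refine ⟨_, ⟨s, hs, t, ht, he, rfl⟩, fun x hx => ?_⟩
              exact (if_pos (hvars x hx)).symm
            · rintro q ⟨s, hs, t, ht, he, rfl⟩
              exact ⟨t, ht, fun x hx => (if_pos (hvars x hx)).symm⟩
          · rw [TeamAux.sat_fo_iff]
            rintro p ⟨s, hs, t, ht, he, rfl⟩
            refine (TeamAux.realize_congr_freeVar θ0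
              (v := fun v => if v ∈ x0 then t v else s v) (v' := t) ?_).mpr (hθ0W t ht)
            intro x hx
            by_cases hx0m : x ∈ x0
            · exact if_pos hx0m
            · show (if x ∈ x0 then t x else s x) = t x
              rw [if_neg hx0m]
              refine (he x ?_).symm
              rw [hVmem]; push_neg
              exact ⟨hx0m, fun h => hx1θ0 x h hx, fun h => hz0f0 (h ▸ hx),
                fun h => hz1f0 (h ▸ hx), fun h => hrf0 (h ▸ hx)⟩
      · rw [TeamAux.exList_sat]
        refine ⟨{p | ∃ s ∈ X, ∃ t ∈ W1, (∀ v, v ∉ V → t v = s v) ∧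
          p = fun v => if v ∈ x1 then t v else s v}, ?_, ?_, ?_⟩
        · rintro s ⟨hs, t, ht, he⟩
          refine ⟨_, ⟨s, hs, t, ht, he, rfl⟩, fun v hv => ?_⟩
          exact if_neg hv
        · rintro p ⟨s, hs, t, ht, he, rfl⟩
          exact ⟨s, ⟨hs, t, ht, he⟩, fun v hv => if_neg hv⟩
        · rw [TeamAux.andList_sat]
          constructor
          · intro ψ hψ
            rw [List.mem_map] at hψ
            obtain ⟨a, ha, rfl⟩ := hψ
            obtain ⟨u, w, v⟩ := a
            have hvars := hatoms1 _ ha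
            have hsatW : (mkIndep (L := L) [r] (u, w, v)).Sat M W :=
              hatoms _ (List.mem_map_of_mem (List.mem_append.mpr (Or.inr ha)))
            rw [← hWu] at hsatW
            have hsatW1 := ((TeamAux.split_indep u w v r W0 W1 (t0 z0) (t0 z1)
              hW0r hW1r hcc).mp hsatW).2
            refine TeamAux.transfer_indep u w v W1 _ ?_ ?_ hsatW1
            · intro t ht
              obtain ⟨s, hs, he⟩ := hW2 t (hW1sub ht)
              refine ⟨_, ⟨s, hs, t, ht, he, rfl⟩, fun x hx => ?_⟩
              exact (if_pos (hvars x hx)).symm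
            · rintro q ⟨s, hs, t, ht, he, rfl⟩
              exact ⟨t, ht, fun x hx => (if_pos (hvars x hx)).symm⟩
          · rw [TeamAux.sat_fo_iff]
            rintro p ⟨s, hs, t, ht, he, rfl⟩
            refine (TeamAux.realize_congr_freeVar θ1
              (v := fun v => if v ∈ x1 then t v else s v) (v' := t) ?_).mpr (hθ1W t ht)
            intro x hx
            by_cases hx1m : x ∈ x1
            · exact if_pos hx1m
            · show (if x ∈ x1 then t x else s x) = t x
              rw [if_neg hx1m]
              refine (he x ?_).symm
              rw [hVmem]; push_neg
              exact ⟨fun h => hx0θ1 x h hx, hx1m, fun h => hz0f1 (h ▸ hx),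
                fun h => hz1f1 (h ▸ hx), fun h => hrf1 (h ▸ hx)⟩
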